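/- Let n, i, j, ℓ be integers with 0 ≤ j ≤ i, j ≤ n − 1, and 0 ≤ ℓ ≤ i − 1. Set r = n − 1 − j, d = n − 1 − (i − j)·r, and s = d − ℓ, and assume d − r ≤ ℓ ≤ d. Then n − 1 − ( (i − j)·( r·(s + 1) − s·(s − 1)/2 ) − (r − s)·s ) ≤ ℓ. -/

import Mathlib

/-- Dimension bound for Thom–Boardman strata: for integers
`n, i, j, ℓ` with `0 ≤ j ≤ i`, `j ≤ n - 1`, `0 ≤ ℓ ≤ i - 1`, setting `r = n - 1 - j`,
`d = n - 1 - (i - j) * r` and `s = d - ℓ`, and assuming `d - r ≤ ℓ ≤ d`, one has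
`n - 1 - ((i - j) * (r * (s + 1) - s * (s - 1) / 2) - (r - s) * s) ≤ ℓ`
(integer division; `s * (s - 1)` is always even). -/
theorem thom_boardman_dim_le
    (n i j ℓ : ℤ) (hj0 : 0 ≤ j) (hji : j ≤ i) (hjn : j ≤ n - 1)
    (hℓ0 : 0 ≤ ℓ) (hℓi : ℓ ≤ i - 1)
    (r d s : ℤ) (hr : r = n - 1 - j) (hd : d = n - 1 - (i - j) * r) (hs : s = d - ℓ)
    (hlo : d - r ≤ ℓ) (hhi : ℓ ≤ d) :
    n - 1 - ((i - j) * (r * (s + 1) - s * (s - 1) / 2) - (r - s) * s) ≤ ℓ := by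
  obtain ⟨k, hk⟩ : Even (s * (s - 1)) := by
    have := Int.even_mul_succ_self (s - 1)
    simpa [mul_comm, sub_add_cancel] using this
  have hdiv : s * (s - 1) / 2 = k := by omega
  rw [hdiv]
  -- exclude the case i = j
  have hq : 1 ≤ i - j := by
    rcases eq_or_lt_of_le hji with h | h
    · exfalso
      have h0 : (i - j) * r = 0 := by rw [← h]; ring
      omega
    · omega
  have hs0 : 0 ≤ s := by omega
  have hsr : s ≤ r := by omega
  have h1 : 0 ≤ s * (s - 1) := by
    rcases le_or_gt 1 s with h | h
    · nlinarith
    · have : s = 0 := by omega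
      simp [this]
  have h2 : 0 ≤ s * (2 * r - s + 1) := by nlinarith
  nlinarith [mul_nonneg (by linarith : (0:ℤ) ≤ i - j - 1) h2,
    mul_nonneg hs0 (by linarith : (0:ℤ) ≤ r - s)]
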